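/- Let H be a formal variable and s > t nonnegative integers. Then in the field ℚ(H), Σ_{r=0}^{s−t} [(s−t)(s−t−1)⋯(s−t−r+1)] / [H(H−1)⋯(H−r+1)] = (H+1)/(H−s+t+1), where the r = 0 term is 1. -/

import Mathlib

lemma zhelobenko_aux {F : Type*} [Field F] (N : ℕ) :
    ∀ x : F, x + 1 ≠ 0 → (∀ k : ℕ, x - k ≠ 0) →
      ∑ r ∈ Finset.range (N + 1),
          (∏ k ∈ Finset.range r, ((N : F) - (k : F))) /
            (∏ k ∈ Finset.range r, (x - (k : F))) =
        (x + 1) / (x - (N : F) + 1) := by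
  induction N with
  | zero =>
    intro x h1 h2
    simp [div_self h1]
  | succ N ih =>
    intro x h1 h2
    have hx : x ≠ 0 := by simpa using h2 0
    have hxN : x - (N : F) ≠ 0 := by simpa using h2 N
    rw [Finset.sum_range_succ']
    have hnum : ∀ r : ℕ,
        (∏ k ∈ Finset.range (r + 1), (((N + 1 : ℕ) : F) - (k : F))) =
          ((N : F) + 1) * ∏ k ∈ Finset.range r, ((N : F) - (k : F)) := by
      intro r
      rw [Finset.prod_range_succ']
      have : ∀ k ∈ Finset.range r,
          (((N + 1 : ℕ) : F) - ((k + 1 : ℕ) : F)) = (N : F) - (k : F) := by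
        intro k _; push_cast; ring
      rw [Finset.prod_congr rfl this]
      push_cast; ring
    have hden : ∀ r : ℕ,
        (∏ k ∈ Finset.range (r + 1), (x - (k : F))) =
          (∏ k ∈ Finset.range r, ((x - 1) - (k : F))) * x := by
      intro r
      rw [Finset.prod_range_succ']
      have : ∀ k ∈ Finset.range r,
          (x - ((k + 1 : ℕ) : F)) = (x - 1) - (k : F) := by
        intro k _; push_cast; ring
      rw [Finset.prod_congr rfl this]
      push_cast; ring
    have hsum : ∑ r ∈ Finset.range (N + 1),
        (∏ k ∈ Finset.range (r + 1), (((N + 1 : ℕ) : F) - (k : F))) /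
          (∏ k ∈ Finset.range (r + 1), (x - (k : F))) =
        (((N : F) + 1) / x) * ∑ r ∈ Finset.range (N + 1),
          (∏ k ∈ Finset.range r, ((N : F) - (k : F))) /
            (∏ k ∈ Finset.range r, ((x - 1) - (k : F))) := by
      rw [Finset.mul_sum]
      refine Finset.sum_congr rfl fun r _ => ?_
      rw [hnum r, hden r]
      field_simp
    have hx1 : (x - 1) + 1 ≠ 0 := by simpa using hx
    have hx2 : ∀ k : ℕ, (x - 1) - (k : F) ≠ 0 := by
      intro k
      have := h2 (k + 1)
      push_cast at this
      intro hc
      apply this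
      linear_combination hc
    rw [hsum, ih (x - 1) hx1 hx2]
    have hxm : x - 1 - (N : F) + 1 = x - (N : F) := by ring
    rw [hxm]
    simp only [Finset.prod_range_zero]
    push_cast
    have hxe : x - 1 + 1 = x := by ring
    rw [hxe]
    have e0 : x - ((N : F) + 1) + 1 = x - (N : F) := by ring
    rw [e0]
    have e1 : ((N : F) + 1) / x * (x / (x - (N : F))) = ((N : F) + 1) / (x - (N : F)) := by
      rw [div_mul_div_comm, mul_comm ((N : F) + 1) x, mul_div_mul_left _ _ hx]
    rw [e1, eq_div_iff hxN, add_mul, div_mul_cancel₀ _ hxN]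
    ring

/-- The rational-function identity in `ℚ(H)` (with `H = X`):
`∑_{r=0}^{s−t} (s−t)(s−t−1)⋯(s−t−r+1) / (H(H−1)⋯(H−r+1)) = (H+1)/(H−s+t+1)`
for nonnegative integers `s > t`, the `r = 0` term being `1`. -/
theorem zhelobenko_rational_identity (s t : ℕ) (h : t < s) :
    ∑ r ∈ Finset.range (s - t + 1),
        (∏ k ∈ Finset.range r, ((s : RatFunc ℚ) - (t : RatFunc ℚ) - (k : RatFunc ℚ))) /
          (∏ k ∈ Finset.range r, (RatFunc.X - (k : RatFunc ℚ))) =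
      (RatFunc.X + 1) / (RatFunc.X - (s : RatFunc ℚ) + (t : RatFunc ℚ) + 1) := by
  have h1 : (RatFunc.X : RatFunc ℚ) + 1 ≠ 0 := by
    have : (RatFunc.X : RatFunc ℚ) + 1 =
        algebraMap (Polynomial ℚ) (RatFunc ℚ) (Polynomial.X + Polynomial.C 1) := by
      rw [map_add, RatFunc.algebraMap_X, RatFunc.algebraMap_C]
      norm_num
    rw [this]
    exact RatFunc.algebraMap_ne_zero (Polynomial.X_add_C_ne_zero 1)
  have h2 : ∀ k : ℕ, (RatFunc.X : RatFunc ℚ) - (k : RatFunc ℚ) ≠ 0 := by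
    intro k
    have : (RatFunc.X : RatFunc ℚ) - (k : RatFunc ℚ) =
        algebraMap (Polynomial ℚ) (RatFunc ℚ) (Polynomial.X - Polynomial.C (k : ℚ)) := by
      rw [map_sub, RatFunc.algebraMap_X, RatFunc.algebraMap_C, map_natCast]
    rw [this]
    exact RatFunc.algebraMap_ne_zero (Polynomial.X_sub_C_ne_zero (k : ℚ))
  have key := zhelobenko_aux (F := RatFunc ℚ) (s - t) RatFunc.X h1 h2
  have hst : ((s - t : ℕ) : RatFunc ℚ) = (s : RatFunc ℚ) - (t : RatFunc ℚ) := by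
    push_cast [Nat.cast_sub h.le]
    ring
  rw [hst] at key
  rw [key]
  ring_nf
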